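/- arXiv:1904.02416 — 7 statements merged into one kernel-verified Lean document; each statement's English description precedes it below -/
import Mathlib

section
/- Let F be a finite field, let G be an l×m matrix over F, let A ⊊ {1,…,m}, and let i ∉ A. Then the following are equivalent: (a) for every vector u ∈ F^m with support contained in A, the vector u + e_i does not lie in the row space of G; (b) the eavesdropper gains no information about x_i from (Gx, x|_A), i.e., for every c ∈ F^l, every assignment a : A → F and all α, β ∈ F, the number of vectors x ∈ F^m satisfying Gx = c, x_j = a(j) for all j ∈ A, and x_i = α equals the number of such vectors with x_i = β in place of x_i = α. -/
open Matrix

/-- Evaluation of a linear functional on `Fin m → F` via its values on basis vectors. -/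
private lemma functional_eq_sum {F : Type*} [Field F] {m : ℕ}
    (f : (Fin m → F) →ₗ[F] F) (x : Fin m → F) :
    f x = ∑ j, x j * f (Pi.single j (1 : F)) := by
  have hx : x = ∑ j, Pi.single j (x j) := (Finset.univ_sum_single x).symm
  rw [hx, map_sum]
  rw [← hx]
  refine Finset.sum_congr rfl fun j _ => ?_
  have h : (Pi.single j (x j) : Fin m → F) = x j • (Pi.single j (1 : F) : Fin m → F) := by
    funext k
    by_cases hk : k = j <;> simp [Pi.single_apply, hk]
  rw [h, _root_.map_smul, smul_eq_mul]

/-- The submodule of vectors supported on `A`. -/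
private def suppSub (F : Type*) [Field F] {m : ℕ} (A : Set (Fin m)) :
    Submodule F (Fin m → F) where
  carrier := {v | ∀ j, v j ≠ 0 → j ∈ A}
  zero_mem' := by intro j hj; simp at hj
  add_mem' := by
    intro v w hv hw j hj
    by_cases h : v j = 0
    · exact hw j (by simpa [h] using hj)
    · exact hv j h
  smul_mem' := by
    intro c v hv j hj
    apply hv j
    intro h
    simp [h] at hj

/-- Lemma 4.3 of Dau–Skachek–Chee, weak security for message `i`.
For a linear index code `x ↦ G.mulVec x` over a finite field `F`, with eavesdropper
side-information set `A ⊂ [m]` and `i ∉ A`, the span condition (a) is equivalent to the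
uniform-conditional-distribution (counting) condition (b). -/
theorem weak_security_iff_uniform_count
    {F : Type*} [Field F] [Fintype F] {l m : ℕ}
    (G : Matrix (Fin l) (Fin m) F) (A : Set (Fin m)) (hA : A ⊂ Set.univ)
    (i : Fin m) (hi : i ∉ A) :
    (∀ u : Fin m → F, (∀ j, u j ≠ 0 → j ∈ A) →
        u + Pi.single i (1 : F) ∉ Submodule.span F (Set.range fun r j => G r j)) ↔
    (∀ (c : Fin l → F) (a : ↥A → F) (α β : F),
        Nat.card {x : Fin m → F //
            G.mulVec x = c ∧ (∀ j : ↥A, x j.1 = a j) ∧ x i = α} =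
        Nat.card {x : Fin m → F //
            G.mulVec x = c ∧ (∀ j : ↥A, x j.1 = a j) ∧ x i = β}) := by
  constructor
  · -- (a) → (b)
    intro ha
    -- First produce a kernel vector `y` with `y i = 1`, `y = 0` on `A`, `G.mulVec y = 0`.
    set W : Submodule F (Fin m → F) :=
      Submodule.span F ((Set.range fun r j => G r j) ∪
        ((fun j => Pi.single j (1 : F)) '' A)) with hW
    have hei : Pi.single i (1 : F) ∉ W := by
      intro hmem
      rw [hW, Submodule.span_union, Submodule.mem_sup] at hmem
      obtain ⟨w, hw, t, ht, hwt⟩ := hmem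
      have htA : ∀ j, t j ≠ 0 → j ∈ A := by
        have hle : Submodule.span F ((fun j => Pi.single j (1 : F)) '' A) ≤ suppSub F A := by
          rw [Submodule.span_le]
          rintro _ ⟨j, hjA, rfl⟩ k hk
          by_contra hkj
          have : k ≠ j := fun h => hkj (h ▸ hjA)
          simp [Pi.single_apply, this] at hk
        exact hle ht
      have huA : ∀ j, (-t) j ≠ 0 → j ∈ A := by
        intro j hj
        exact htA j (by simpa using hj)
      apply ha (-t) huA
      have : (-t) + Pi.single i (1 : F) = w := by
        rw [← hwt]; abel
      rw [this]
      exact hw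
    obtain ⟨f, hfi, hfW⟩ := W.exists_dual_map_eq_bot_of_notMem hei inferInstance
    have hfW' : ∀ w ∈ W, f w = 0 := by
      intro w hw
      have : f w ∈ W.map f := Submodule.mem_map_of_mem hw
      rw [hfW] at this
      simpa using this
    set g : (Fin m → F) →ₗ[F] F := (f (Pi.single i (1 : F)))⁻¹ • f with hg
    set y : Fin m → F := fun j => g (Pi.single j (1 : F)) with hy
    have hgW : ∀ w ∈ W, g w = 0 := by
      intro w hw
      simp [hg, hfW' w hw]
    have hyi : y i = 1 := by
      simp only [hy, hg, LinearMap.smul_apply, smul_eq_mul]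
      exact inv_mul_cancel₀ hfi
    have hyA : ∀ j ∈ A, y j = 0 := by
      intro j hj
      apply hgW
      exact Submodule.subset_span (Or.inr ⟨j, hj, rfl⟩)
    have hGy : G.mulVec y = 0 := by
      funext r
      have hrow : (fun j => G r j) ∈ W := Submodule.subset_span (Or.inl ⟨r, rfl⟩)
      have := hgW _ hrow
      rw [functional_eq_sum] at this
      simpa [Matrix.mulVec, dotProduct, hy] using this
    -- Now build the bijection.
    intro c a α β
    refine Nat.card_congr ?_
    have key : ∀ (s₁ s₂ : F) (x : Fin m → F),
        (G.mulVec x = c ∧ (∀ j : ↥A, x j.1 = a j) ∧ x i = s₁) →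
        (G.mulVec (x + (s₂ - s₁) • y) = c ∧
          (∀ j : ↥A, (x + (s₂ - s₁) • y) j.1 = a j) ∧ (x + (s₂ - s₁) • y) i = s₂) := by
      rintro s₁ s₂ x ⟨h1, h2, h3⟩
      refine ⟨?_, ?_, ?_⟩
      · rw [Matrix.mulVec_add, Matrix.mulVec_smul, hGy, h1]
        simp
      · intro j
        have := hyA j.1 j.2
        simp [this, h2 j]
      · simp [h3, hyi]
    exact
      { toFun := fun x => ⟨x.1 + (β - α) • y, key α β x.1 x.2⟩
        invFun := fun x => ⟨x.1 + (α - β) • y, key β α x.1 x.2⟩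
        left_inv := by
          rintro ⟨x, hx⟩
          ext1
          show x + (β - α) • y + (α - β) • y = x
          rw [add_assoc, ← add_smul]
          simp
        right_inv := by
          rintro ⟨x, hx⟩
          ext1
          show x + (α - β) • y + (β - α) • y = x
          rw [add_assoc, ← add_smul]
          simp }
  · -- (b) → (a)
    intro hb u hu hmem
    rw [Submodule.mem_span_range_iff_exists_fun] at hmem
    obtain ⟨d, hd⟩ := hmem
    -- every solution for c = 0, a = 0 has `x i = 0`
    have hforce : ∀ x : Fin m → F, G.mulVec x = 0 → (∀ j : ↥A, x j.1 = 0) → x i = 0 := by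
      intro x hGx hxA
      have h1 : (∑ r, d r • fun j => G r j) ⬝ᵥ x = (u + Pi.single i (1 : F)) ⬝ᵥ x := by
        rw [hd]
      have h2 : (∑ r, d r • fun j => G r j) ⬝ᵥ x = 0 := by
        unfold dotProduct
        simp only [Finset.sum_apply, Pi.smul_apply, smul_eq_mul, Finset.sum_mul]
        rw [Finset.sum_comm]
        refine Finset.sum_eq_zero fun r _ => ?_
        have hmv : ∑ j, d r * G r j * x j = d r * G.mulVec x r := by
          simp [Matrix.mulVec, dotProduct, Finset.mul_sum, mul_assoc]
        rw [hmv, hGx]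
        simp
      have h3 : u ⬝ᵥ x = 0 := by
        unfold dotProduct
        refine Finset.sum_eq_zero fun j _ => ?_
        by_cases hj : u j = 0
        · simp [hj]
        · have hjA := hu j hj
          have : x j = 0 := hxA ⟨j, hjA⟩
          simp [this]
      rw [h2, add_dotProduct, h3, single_dotProduct, one_mul, zero_add] at h1
      exact h1.symm
    have h01 := hb 0 (fun _ => 0) 0 1
    have hpos : 0 < Nat.card {x : Fin m → F //
        G.mulVec x = 0 ∧ (∀ j : ↥A, x j.1 = (fun _ => 0 : ↥A → F) j) ∧ x i = 0} := by
      have : Nonempty {x : Fin m → F //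
          G.mulVec x = 0 ∧ (∀ j : ↥A, x j.1 = (fun _ => 0 : ↥A → F) j) ∧ x i = 0} :=
        ⟨⟨0, by simp [Matrix.mulVec_zero], fun j => rfl, rfl⟩⟩
      exact Nat.card_pos
    have hzero : Nat.card {x : Fin m → F //
        G.mulVec x = 0 ∧ (∀ j : ↥A, x j.1 = (fun _ => 0 : ↥A → F) j) ∧ x i = 1} = 0 := by
      rw [Nat.card_eq_zero]
      left
      constructor
      rintro ⟨x, hGx, hxA, hxi⟩
      have := hforce x hGx hxA
      rw [hxi] at this
      exact one_ne_zero this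
    rw [h01, hzero] at hpos
    exact lt_irrefl 0 hpos
end

section
/- Let F be a finite field and let the index set [m] = {1,…,m} be partitioned into S_1 = {1,…,m_1} and S_2 = {m_1+1,…,m}. Let K_i ⊆ [m]\{i} be arbitrary side-information sets (possibly containing indices from both parts), and let A = A_1 ∪ A_2 with A_1 ⊆ S_1 and A_2 ⊆ S_2. For j ∈ {1,2} let G_j ∈ F^{l_j×m_j} be a valid index code for the sub-instance on S_j with side-information sets K_i ∩ S_j (i ∈ S_j) that is weakly secure against A_j. Then the block-diagonal matrix G = diag(G_1, G_2) ∈ F^{(l_1+l_2)×m} is a valid index code for the full instance (with side-information sets K_i) and is weakly secure against A. In particular the optimal length of a valid weakly secure linear index code for the full instance is at most l*_1 + l*_2, the sum of the optimal lengths for the two sub-instances. -/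
open Matrix Sum

noncomputable section

variable (F : Type*) [Field F] [Fintype F]

/-- The row space of a matrix: the span of its rows. -/
def rowSpace {ρ ι : Type*} (G : Matrix ρ ι F) : Submodule F (ι → F) :=
  Submodule.span F (Set.range fun r j => G r j)

/-- Weak security of the linear code `x ↦ G x` against an eavesdropper knowing `x j` for
`j ∈ A`: for every `i ∉ A` and every `u` supported in `A`, `u + e i` is not in the
row space of `G`. -/
def WeaklySecure {ρ ι : Type*} [DecidableEq ι] (G : Matrix ρ ι F) (A : Set ι) : Prop :=
  ∀ i ∉ A, ∀ u : ι → F, (∀ j, u j ≠ 0 → j ∈ A) →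
    u + Pi.single i (1 : F) ∉ rowSpace F G

/-- `G` is a valid index code for side-information sets `K`: every receiver `i` can
decode `x i` from the codeword `G.mulVec x` and its side information `x|_{K i}`. -/
def ValidCode {ρ ι : Type*} [Fintype ι] (K : ι → Set ι) (G : Matrix ρ ι F) : Prop :=
  ∀ i : ι, ∃ D : (ρ → F) → (↥(K i) → F) → F,
    ∀ x : ι → F, D (G.mulVec x) (fun j => x j.1) = x i


set_option linter.unusedSectionVars false

lemma rowSpace_left {m1 m2 l1 l2 : ℕ}
    (G1 : Matrix (Fin l1) (Fin m1) F) (G2 : Matrix (Fin l2) (Fin m2) F)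
    {v : (Fin m1 ⊕ Fin m2) → F} (hv : v ∈ rowSpace F (Matrix.fromBlocks G1 0 0 G2)) :
    (fun j => v (Sum.inl j)) ∈ rowSpace F G1 := by
  have h : rowSpace F (Matrix.fromBlocks G1 0 0 G2) ≤
      (rowSpace F G1).comap (LinearMap.funLeft F F Sum.inl) := by
    rw [rowSpace, Submodule.span_le]
    rintro _ ⟨r, rfl⟩
    simp only [SetLike.mem_coe, Submodule.mem_comap, LinearMap.funLeft_apply]
    cases r with
    | inl r =>
      exact Submodule.subset_span ⟨r, by ext j; simp⟩
    | inr r =>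
      show ((fun j => Matrix.fromBlocks G1 0 0 G2 (Sum.inr r) j) ∘ Sum.inl) ∈ rowSpace F G1
      have : ((fun j => Matrix.fromBlocks G1 0 0 G2 (Sum.inr r) j) ∘ Sum.inl)
          = (0 : Fin m1 → F) := by ext j; simp
      rw [this]; exact (rowSpace F G1).zero_mem
  exact h hv

lemma rowSpace_right {m1 m2 l1 l2 : ℕ}
    (G1 : Matrix (Fin l1) (Fin m1) F) (G2 : Matrix (Fin l2) (Fin m2) F)
    {v : (Fin m1 ⊕ Fin m2) → F} (hv : v ∈ rowSpace F (Matrix.fromBlocks G1 0 0 G2)) :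
    (fun j => v (Sum.inr j)) ∈ rowSpace F G2 := by
  have h : rowSpace F (Matrix.fromBlocks G1 0 0 G2) ≤
      (rowSpace F G2).comap (LinearMap.funLeft F F Sum.inr) := by
    rw [rowSpace, Submodule.span_le]
    rintro _ ⟨r, rfl⟩
    simp only [SetLike.mem_coe, Submodule.mem_comap, LinearMap.funLeft_apply]
    cases r with
    | inr r =>
      exact Submodule.subset_span ⟨r, by ext j; simp⟩
    | inl r =>
      show ((fun j => Matrix.fromBlocks G1 0 0 G2 (Sum.inl r) j) ∘ Sum.inr) ∈ rowSpace F G2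
      have : ((fun j => Matrix.fromBlocks G1 0 0 G2 (Sum.inl r) j) ∘ Sum.inr)
          = (0 : Fin m2 → F) := by ext j; simp
      rw [this]; exact (rowSpace F G2).zero_mem
  exact h hv

lemma mulVec_fromBlocks_inl {m1 m2 l1 l2 : ℕ}
    (G1 : Matrix (Fin l1) (Fin m1) F) (G2 : Matrix (Fin l2) (Fin m2) F)
    (x : (Fin m1 ⊕ Fin m2) → F) (r : Fin l1) :
    (Matrix.fromBlocks G1 0 0 G2).mulVec x (Sum.inl r)
      = G1.mulVec (fun j => x (Sum.inl j)) r := by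
  simp [Matrix.mulVec, dotProduct, Fintype.sum_sum_type]

lemma mulVec_fromBlocks_inr {m1 m2 l1 l2 : ℕ}
    (G1 : Matrix (Fin l1) (Fin m1) F) (G2 : Matrix (Fin l2) (Fin m2) F)
    (x : (Fin m1 ⊕ Fin m2) → F) (r : Fin l2) :
    (Matrix.fromBlocks G1 0 0 G2).mulVec x (Sum.inr r)
      = G2.mulVec (fun j => x (Sum.inr j)) r := by
  simp [Matrix.mulVec, dotProduct, Fintype.sum_sum_type]

/-- If `G₁`, `G₂` are valid index codes for the two sub-instances on the
parts `S₁ ≃ Fin m₁` and `S₂ ≃ Fin m₂` (side information restricted to each part), weakly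
secure against `A₁`, `A₂` respectively, then the block-diagonal matrix
`fromBlocks G₁ 0 0 G₂` is a valid index code for the full instance (with the full
side-information sets `K`) and is weakly secure against `A = A₁ ∪ A₂`.  In particular a
valid weakly secure code of length `l₁ + l₂` exists for the full instance. -/
theorem blockDiag_validCode_and_weaklySecure {m1 m2 l1 l2 : ℕ}
    (K : (Fin m1 ⊕ Fin m2) → Set (Fin m1 ⊕ Fin m2)) (hK : ∀ i, i ∉ K i)
    (A1 : Set (Fin m1)) (A2 : Set (Fin m2))
    (G1 : Matrix (Fin l1) (Fin m1) F) (G2 : Matrix (Fin l2) (Fin m2) F)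
    (hG1v : ValidCode F (fun i => {j | Sum.inl j ∈ K (Sum.inl i)}) G1)
    (hG1s : WeaklySecure F G1 A1)
    (hG2v : ValidCode F (fun i => {j | Sum.inr j ∈ K (Sum.inr i)}) G2)
    (hG2s : WeaklySecure F G2 A2) :
    ValidCode F K (Matrix.fromBlocks G1 0 0 G2) ∧
    WeaklySecure F (Matrix.fromBlocks G1 0 0 G2) (Sum.inl '' A1 ∪ Sum.inr '' A2) ∧
    ∃ G : Matrix (Fin (l1 + l2)) (Fin m1 ⊕ Fin m2) F,
      ValidCode F K G ∧ WeaklySecure F G (Sum.inl '' A1 ∪ Sum.inr '' A2) := by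
  have hv : ValidCode F K (Matrix.fromBlocks G1 0 0 G2) := by
    intro i
    cases i with
    | inl i =>
      obtain ⟨D, hD⟩ := hG1v i
      refine ⟨fun c s => D (fun r => c (Sum.inl r)) (fun j => s ⟨Sum.inl j.1, j.2⟩), ?_⟩
      intro x
      have h := hD (fun j => x (Sum.inl j))
      simpa [mulVec_fromBlocks_inl] using h
    | inr i =>
      obtain ⟨D, hD⟩ := hG2v i
      refine ⟨fun c s => D (fun r => c (Sum.inr r)) (fun j => s ⟨Sum.inr j.1, j.2⟩), ?_⟩
      intro x
      have h := hD (fun j => x (Sum.inr j))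
      simpa [mulVec_fromBlocks_inr] using h
  have hs : WeaklySecure F (Matrix.fromBlocks G1 0 0 G2)
      (Sum.inl '' A1 ∪ Sum.inr '' A2) := by
    intro i hi u hu hmem
    cases i with
    | inl i =>
      have hi1 : i ∉ A1 := fun h => hi (Or.inl ⟨i, h, rfl⟩)
      have h1 := rowSpace_left F G1 G2 hmem
      have h1' : (fun j => u (Sum.inl j)) + Pi.single i 1 ∈ rowSpace F G1 := by
        convert h1 using 1
        ext j; simp [Pi.single_apply]
      refine hG1s i hi1 _ (fun j hj => ?_) h1' 
      rcases hu (Sum.inl j) hj with ⟨a, ha, hae⟩ | ⟨a, ha, hae⟩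
      · cases hae; exact ha
      · simp at hae
    | inr i =>
      have hi2 : i ∉ A2 := fun h => hi (Or.inr ⟨i, h, rfl⟩)
      have h2 := rowSpace_right F G1 G2 hmem
      have h2' : (fun j => u (Sum.inr j)) + Pi.single i 1 ∈ rowSpace F G2 := by
        convert h2 using 1
        ext j; simp [Pi.single_apply]
      refine hG2s i hi2 _ (fun j hj => ?_) h2' 
      rcases hu (Sum.inr j) hj with ⟨a, ha, hae⟩ | ⟨a, ha, hae⟩
      · simp at hae
      · cases hae; exact ha
  refine ⟨hv, hs, ?_⟩
  set e : Fin (l1 + l2) ≃ (Fin l1 ⊕ Fin l2) := finSumFinEquiv.symm with he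
  refine ⟨(Matrix.fromBlocks G1 0 0 G2).submatrix e id, ?_, ?_⟩
  · intro i
    obtain ⟨D, hD⟩ := hv i
    refine ⟨fun c s => D (fun r => c (e.symm r)) s, fun x => ?_⟩
    have hm : (fun r => ((Matrix.fromBlocks G1 0 0 G2).submatrix e id).mulVec x (e.symm r))
        = (Matrix.fromBlocks G1 0 0 G2).mulVec x := by
      ext r
      simp [Matrix.mulVec, dotProduct, Matrix.submatrix_apply]
    show D (fun r => ((Matrix.fromBlocks G1 0 0 G2).submatrix e id).mulVec x (e.symm r))
        (fun j => x j.1) = x i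
    rw [hm]; exact hD x
  · have hrs : rowSpace F ((Matrix.fromBlocks G1 0 0 G2).submatrix e id)
        = rowSpace F (Matrix.fromBlocks G1 0 0 G2) := by
      unfold rowSpace
      congr 1
      have : (fun r j => ((Matrix.fromBlocks G1 0 0 G2).submatrix e id) r j)
          = (fun r j => (Matrix.fromBlocks G1 0 0 G2) r j) ∘ e := rfl
      rw [this, e.surjective.range_comp]
    intro i hi u hu
    rw [hrs]
    exact hs i hi u hu
end
end

section
/- Let F be a field and partition the columns [m] into P_1, P_2, P_{12} of sizes m_1, m_2, m_{12}. Let G_1 ∈ F^{l_1×m_1}, G_2 ∈ F^{l_2×m_2}, G_{12} ∈ F^{l_{12}×m_{12}} with l_{12} ≥ l_1 + l_2, and let A = A_1 ∪ A_2 ∪ A_{12} with A_T ⊆ P_T. Form the l_{12} × m matrix G whose rows 1,…,l_1 equal (G_1 | 0 | first l_1 rows of G_{12}), whose rows l_1+1,…,l_1+l_2 equal (0 | G_2 | rows l_1+1,…,l_1+l_2 of G_{12}), and whose remaining rows equal (0 | 0 | remaining rows of G_{12}), the column blocks being P_1, P_2, P_{12}. If G_1 is weakly secure against A_1 (on columns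 P_1), G_2 is weakly secure against A_2 (on columns P_2), and G_{12} is weakly secure against A_{12} (on columns P_{12}), then G is weakly secure against A. -/
open Matrix Sum

noncomputable section

variable (F : Type*) [Field F]

lemma mem_rowSpace_iff {ρ ι : Type*} [Fintype ρ] (G : Matrix ρ ι F) (x : ι → F) :
    x ∈ rowSpace F G ↔ ∃ c : ρ → F, ∀ j, x j = ∑ r, c r * G r j := by
  rw [rowSpace, Submodule.mem_span_range_iff_exists_fun]
  constructor
  · rintro ⟨c, rfl⟩
    exact ⟨c, fun j => by simp [Finset.sum_apply]⟩
  · rintro ⟨c, h⟩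
    refine ⟨c, funext fun j => ?_⟩
    simp [Finset.sum_apply, (h j).symm]

lemma sum_interval {n a b : ℕ} (hab : a + b ≤ n) (f : Fin n → F) (g : Fin b → F)
    (hf0 : ∀ r : Fin n, (r : ℕ) < a ∨ a + b ≤ (r : ℕ) → f r = 0)
    (hfg : ∀ r : Fin b, f ⟨a + r, by omega⟩ = g r) :
    ∑ r, f r = ∑ r, g r := by
  classical
  let e : Fin b ↪ Fin n := ⟨fun r => ⟨a + r, by omega⟩, fun r s h => by
    have := congrArg Fin.val h
    simp only at this
    exact Fin.ext (by omega)⟩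
  have h1 : ∑ r ∈ Finset.univ.map e, f r = ∑ r : Fin n, f r := by
    apply Finset.sum_subset (Finset.subset_univ _)
    intro x _ hx
    apply hf0
    by_contra hc
    push_neg at hc
    exact hx (Finset.mem_map.mpr ⟨⟨(x : ℕ) - a, by omega⟩, Finset.mem_univ _,
      Fin.ext (by show a + ((x : ℕ) - a) = (x : ℕ); omega)⟩)
  rw [← h1, Finset.sum_map]
  exact Finset.sum_congr rfl fun r _ => hfg r

/-- With `l12 ≥ l1 + l2`, form the `l12 × m` matrix `G` whose rows
`1, …, l1` equal `(G1 | 0 | first l1 rows of G12)`, whose rows `l1+1, …, l1+l2` equal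
`(0 | G2 | rows l1+1, …, l1+l2 of G12)`, and whose remaining rows equal
`(0 | 0 | remaining rows of G12)`, on the column blocks `P1 ≃ Fin m1`, `P2 ≃ Fin m2`,
`P12 ≃ Fin m12`.  If `G1, G2, G12` are weakly secure against `A1, A2, A12`, then `G` is
weakly secure against `A = A1 ∪ A2 ∪ A12`. -/
theorem stacked_weaklySecure {m1 m2 m12 l1 l2 l12 : ℕ} (hl : l1 + l2 ≤ l12)
    (G1 : Matrix (Fin l1) (Fin m1) F) (G2 : Matrix (Fin l2) (Fin m2) F)
    (G12 : Matrix (Fin l12) (Fin m12) F)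
    (A1 : Set (Fin m1)) (A2 : Set (Fin m2)) (A12 : Set (Fin m12))
    (hs1 : WeaklySecure F G1 A1) (hs2 : WeaklySecure F G2 A2)
    (hs12 : WeaklySecure F G12 A12) :
    WeaklySecure F
      (Matrix.of fun (r : Fin l12) (j : Fin m1 ⊕ Fin m2 ⊕ Fin m12) =>
        Sum.elim
          (fun j1 => if h : (r : ℕ) < l1 then G1 ⟨(r : ℕ), h⟩ j1 else 0)
          (Sum.elim
            (fun j2 => if h : (r : ℕ) < l1 + l2 ∧ l1 ≤ (r : ℕ) then
                G2 ⟨(r : ℕ) - l1, by omega⟩ j2 else 0)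
            (fun j12 => G12 r j12)) j)
      {j | Sum.elim (· ∈ A1) (Sum.elim (· ∈ A2) (· ∈ A12)) j} := by
  classical
  intro i hi u hu hmem
  rw [mem_rowSpace_iff] at hmem
  obtain ⟨c, hc⟩ := hmem
  match i with
  | inl i1 =>
    refine hs1 i1 hi (fun j => u (inl j)) (fun j hj => hu (inl j) hj) ?_
    rw [mem_rowSpace_iff]
    refine ⟨fun r => c ⟨(r : ℕ), by omega⟩, fun j => ?_⟩
    have h := hc (inl j)
    simp only [Matrix.of_apply, Sum.elim_inl] at h
    rw [sum_interval F (a := 0) (b := l1) (by omega) _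
        (fun r => c ⟨(r : ℕ), by omega⟩ * G1 r j)
        (fun r hr => by rw [dif_neg (by omega)]; ring)
        (fun r => by rw [dif_pos (by simp)]; simp)] at h
    rw [← h]
    simp [Pi.single_apply]
  | inr (inl i2) =>
    refine hs2 i2 hi (fun j => u (inr (inl j))) (fun j hj => hu (inr (inl j)) hj) ?_
    rw [mem_rowSpace_iff]
    refine ⟨fun r => c ⟨l1 + (r : ℕ), by omega⟩, fun j => ?_⟩
    have h := hc (inr (inl j))
    simp only [Matrix.of_apply, Sum.elim_inr, Sum.elim_inl] at h
    rw [sum_interval F (a := l1) (b := l2) (by omega) _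
        (fun r => c ⟨l1 + (r : ℕ), by omega⟩ * G2 r j)
        (fun r hr => by rw [dif_neg (by omega)]; ring)
        (fun r => by
          rw [dif_pos (show l1 + (r : ℕ) < l1 + l2 ∧ l1 ≤ l1 + (r : ℕ) from by omega)]
          congr 1
          congr 1
          exact Fin.ext (by simp))] at h
    rw [← h]
    simp [Pi.single_apply]
  | inr (inr i12) =>
    refine hs12 i12 hi (fun j => u (inr (inr j))) (fun j hj => hu (inr (inr j)) hj) ?_
    rw [mem_rowSpace_iff]
    refine ⟨c, fun j => ?_⟩
    have h := hc (inr (inr j))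
    simp only [Matrix.of_apply, Sum.elim_inr] at h
    rw [← h]
    simp [Pi.single_apply]
end
end

section
/- Let F be a finite field, and consider a single-sender index coding instance on [m] with side-information sets K_i ⊆ [m]\{i}. A matrix G ∈ F^{l×m} is a valid index code — i.e., for every i ∈ [m] there exists a decoding function D_i : F^l × F^{K_i} → F with D_i(Gx, x|_{K_i}) = x_i for all x ∈ F^m — if and only if for every i ∈ [m] there exists a vector u_i ∈ F^m with support contained in K_i such that u_i + e_i lies in the row space of G. -/
open Matrix

noncomputable section

variable (F : Type*) [Field F] [Fintype F]

/-- Corollary 4.5 of Dau–Skachek–Chee.  Over a finite field, `G` is a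
valid index code for the instance with side-information sets `K` iff for every receiver
`i` there is a vector `u_i` supported in `K i` with `u_i + e_i` in the row space of
`G`. -/
theorem validCode_iff_exists_support_add_single_mem_rowSpace {l m : ℕ}
    (K : Fin m → Set (Fin m)) (hK : ∀ i, i ∉ K i)
    (G : Matrix (Fin l) (Fin m) F) :
    ValidCode F K G ↔
      ∀ i : Fin m, ∃ u : Fin m → F, (∀ j, u j ≠ 0 → j ∈ K i) ∧
        u + Pi.single i (1 : F) ∈ rowSpace F G := by
  classical
  constructor
  · intro hvalid i
    obtain ⟨D, hD⟩ := hvalid i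
    -- Let S be the span of the rows of G together with e_j, j ∈ K i.
    set S : Submodule F (Fin m → F) :=
      rowSpace F G ⊔ Submodule.span F ((fun j => Pi.single j (1 : F)) '' (K i)) with hS
    -- Claim e_i ∈ S.
    have hei : Pi.single i (1 : F) ∈ S := by
      by_contra hnot
      obtain ⟨φ, hφx, hφbot⟩ := Submodule.exists_dual_map_eq_bot_of_notMem hnot inferInstance
      have hφS : ∀ v ∈ S, φ v = 0 := by
        intro v hv
        have : φ v ∈ S.map φ := Submodule.mem_map_of_mem hv
        rw [hφbot] at this
        exact (Submodule.mem_bot F).mp this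
      set x₀ : Fin m → F := fun j => φ (Pi.single j 1) with hx₀
      have hrep : ∀ v : Fin m → F, φ v = ∑ j, v j * x₀ j := by
        intro v
        have : v = ∑ j, v j • (Pi.single j (1 : F) : Fin m → F) := by
          ext k; simp [Pi.single_apply, Finset.sum_apply, mul_comm]
        nth_rewrite 1 [this]
        simp [hx₀, smul_eq_mul]
      -- G x₀ = 0
      have hGx₀ : G.mulVec x₀ = 0 := by
        funext r
        have hrow : (fun j => G r j) ∈ S := by
          refine le_sup_left (α := Submodule F (Fin m → F)) ?_
          exact Submodule.subset_span ⟨r, rfl⟩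
        have := hφS _ hrow
        rw [hrep] at this
        simpa [Matrix.mulVec, dotProduct] using this
      -- x₀ vanishes on K i
      have hx₀K : ∀ j ∈ K i, x₀ j = 0 := by
        intro j hj
        have hmem : Pi.single j (1 : F) ∈ S := by
          refine le_sup_right (α := Submodule F (Fin m → F)) ?_
          exact Submodule.subset_span ⟨j, hj, rfl⟩
        exact hφS _ hmem
      -- decode x₀ and 0
      have h1 := hD x₀
      have h2 := hD 0
      have hside : (fun j : ↥(K i) => x₀ j.1) = (fun j : ↥(K i) => (0 : Fin m → F) j.1) := by
        funext j; simpa using hx₀K j.1 j.2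
      rw [hGx₀] at h1
      simp only [Matrix.mulVec_zero] at h2
      rw [hside, h2] at h1
      -- but x₀ i = φ (e_i) ≠ 0
      apply hφx
      simpa [hx₀] using h1.symm
    -- extract u
    rw [hS, Submodule.mem_sup] at hei
    obtain ⟨r, hr, w, hw, hrw⟩ := hei
    refine ⟨-w, ?_, ?_⟩
    · intro j hj
      by_contra hjK
      have : w j = 0 := by
        have hsub : Submodule.span F ((fun j => Pi.single j (1 : F)) '' (K i)) ≤
            LinearMap.ker (LinearMap.proj (R := F) (φ := fun _ : Fin m => F) j) := by
          rw [Submodule.span_le]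
          rintro _ ⟨k, hk, rfl⟩
          have : k ≠ j := by rintro rfl; exact hjK hk
          simp [LinearMap.mem_ker, Pi.single_apply, this]
        have := hsub hw
        simpa using this
      simp [this] at hj
    · have : -w + Pi.single i (1 : F) = r := by
        rw [← hrw]; abel
      rw [this]; exact hr
  · intro h i
    obtain ⟨u, hu, hmem⟩ := h i
    rw [rowSpace, Submodule.mem_span_range_iff_exists_fun F] at hmem
    obtain ⟨c, hc⟩ := hmem
    refine ⟨fun y s => (∑ r, c r * y r) -
      ∑ j : Fin m, if hj : j ∈ K i then u j * s ⟨j, hj⟩ else 0, ?_⟩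
    intro x
    have h1 : (∑ r, c r * G.mulVec x r) = ∑ j, (u j + (Pi.single i (1 : F) : Fin m → F) j) * x j := by
      have hc' : ∀ j, (∑ r : Fin l, c r * G r j) = u j + (Pi.single i (1 : F) : Fin m → F) j := by
        intro j
        have := congrFun hc j
        simpa [Finset.sum_apply] using this
      simp only [← hc']
      simp only [Matrix.mulVec, dotProduct, Finset.mul_sum, Finset.sum_mul, mul_assoc]
      exact Finset.sum_comm
    have h2 : (∑ j : Fin m, if hj : j ∈ K i then u j * x j else 0) = ∑ j, u j * x j := by
      apply Finset.sum_congr rfl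
      intro j _
      by_cases hj : j ∈ K i
      · simp [hj]
      · have : u j = 0 := by by_contra h'; exact hj (hu j h')
        simp [hj, this]
    simp only [h2]
    rw [h1]
    have h3 : ∀ j, (u j + (Pi.single i (1 : F) : Fin m → F) j) * x j
        = u j * x j + (if j = i then x j else 0) := by
      intro j; by_cases hj : j = i <;> simp [Pi.single_apply, hj, add_mul]
    simp only [h3, Finset.sum_add_distrib, Finset.sum_ite_eq', Finset.mem_univ, if_true]
    ring
end
end

section
/- Let F be a field and partition [m] into S_1 = {1,…,m_1} and S_2 = {m_1+1,…,m}. Let G be an l×m matrix that is block diagonal with respect to this partition: G = diag(G_1, G_2) with G_1 ∈ F^{l_1×m_1}, G_2 ∈ F^{l_2×m_2}, l = l_1 + l_2. Let A = A_1 ∪ A_2 with A_1 ⊆ S_1 and A_2 ⊆ S_2, each A_j a proper subset of S_j. Then G is weakly secure against A if and only if G_1 is weakly secure against A_1 (as a code on S_1) and G_2 is weakly secure against A_2 (as a code on S_2). -/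
open Matrix Sum

noncomputable section

variable (F : Type*) [Field F]

def elimL {α β : Type*} : (α → F) →ₗ[F] (α ⊕ β → F) where
  toFun w := Sum.elim w 0
  map_add' x y := by funext j; cases j <;> simp
  map_smul' c x := by funext j; cases j <;> simp

def elimR {α β : Type*} : (β → F) →ₗ[F] (α ⊕ β → F) where
  toFun w := Sum.elim 0 w
  map_add' x y := by funext j; cases j <;> simp
  map_smul' c x := by funext j; cases j <;> simp

lemma mem_rowSpace_fromBlocks {m1 m2 l1 l2 : ℕ}
    (G1 : Matrix (Fin l1) (Fin m1) F) (G2 : Matrix (Fin l2) (Fin m2) F)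
    (v : Fin m1 ⊕ Fin m2 → F) :
    v ∈ rowSpace F (Matrix.fromBlocks G1 0 0 G2) ↔
      (fun j => v (inl j)) ∈ rowSpace F G1 ∧ (fun j => v (inr j)) ∈ rowSpace F G2 := by
  constructor
  · intro hv
    have : rowSpace F (Matrix.fromBlocks G1 0 0 G2) ≤
        (rowSpace F G1).comap (LinearMap.funLeft F F inl) ⊓
        (rowSpace F G2).comap (LinearMap.funLeft F F inr) := by
      apply Submodule.span_le.2
      rintro _ ⟨r, rfl⟩
      simp only [SetLike.mem_coe, Submodule.mem_inf, Submodule.mem_comap]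
      cases r with
      | inl r =>
        refine ⟨Submodule.subset_span ⟨r, rfl⟩, ?_⟩
        have : (LinearMap.funLeft F F inr) (fun j => Matrix.fromBlocks G1 0 0 G2 (inl r) j)
            = 0 := by funext j; simp [LinearMap.funLeft]
        rw [this]; exact (rowSpace F G2).zero_mem
      | inr r =>
        refine ⟨?_, Submodule.subset_span ⟨r, rfl⟩⟩
        have : (LinearMap.funLeft F F inl) (fun j => Matrix.fromBlocks G1 0 0 G2 (inr r) j)
            = 0 := by funext j; simp [LinearMap.funLeft]
        rw [this]; exact (rowSpace F G1).zero_mem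
    exact this hv
  · rintro ⟨h1, h2⟩
    have hL : ∀ w ∈ rowSpace F G1, elimL F w ∈ rowSpace F (Matrix.fromBlocks G1 0 0 G2) := by
      intro w hw
      induction hw using Submodule.span_induction with
      | mem x hx =>
        obtain ⟨r, rfl⟩ := hx
        apply Submodule.subset_span
        exact ⟨inl r, by funext j; cases j <;> simp [elimL]⟩
      | zero => simp
      | add x y _ _ hx hy => rw [map_add]; exact Submodule.add_mem _ hx hy
      | smul c x _ hx => rw [_root_.map_smul]; exact Submodule.smul_mem _ c hx
    have hR : ∀ w ∈ rowSpace F G2, elimR F w ∈ rowSpace F (Matrix.fromBlocks G1 0 0 G2) := by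
      intro w hw
      induction hw using Submodule.span_induction with
      | mem x hx =>
        obtain ⟨r, rfl⟩ := hx
        apply Submodule.subset_span
        exact ⟨inr r, by funext j; cases j <;> simp [elimR]⟩
      | zero => simp
      | add x y _ _ hx hy => rw [map_add]; exact Submodule.add_mem _ hx hy
      | smul c x _ hx => rw [_root_.map_smul]; exact Submodule.smul_mem _ c hx
    have hv : v = elimL F (fun j => v (inl j)) + elimR F (fun j => v (inr j)) := by
      funext j; cases j <;> simp [elimL, elimR]
    rw [hv]
    exact Submodule.add_mem _ (hL _ h1) (hR _ h2)

lemma elim_mem_rowSpace_fromBlocks {m1 m2 l1 l2 : ℕ}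
    (G1 : Matrix (Fin l1) (Fin m1) F) (G2 : Matrix (Fin l2) (Fin m2) F)
    (u1 : Fin m1 → F) (u2 : Fin m2 → F) :
    Sum.elim u1 u2 ∈ rowSpace F (Matrix.fromBlocks G1 0 0 G2) ↔
      u1 ∈ rowSpace F G1 ∧ u2 ∈ rowSpace F G2 :=
  mem_rowSpace_fromBlocks F G1 G2 (Sum.elim u1 u2)

/-- A block-diagonal matrix `diag(G1, G2)` (with respect to the column
partition `S1 ≃ Fin m1`, `S2 ≃ Fin m2`) is weakly secure against `A = A1 ∪ A2`
(`A1 ⊊ S1`, `A2 ⊊ S2`) iff `G1` is weakly secure against `A1` and `G2` is weakly secure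
against `A2`. -/
theorem blockDiag_weaklySecure_iff {m1 m2 l1 l2 : ℕ}
    (G1 : Matrix (Fin l1) (Fin m1) F) (G2 : Matrix (Fin l2) (Fin m2) F)
    (A1 : Set (Fin m1)) (A2 : Set (Fin m2))
    (hA1 : A1 ≠ Set.univ) (hA2 : A2 ≠ Set.univ) :
    WeaklySecure F (Matrix.fromBlocks G1 0 0 G2)
        (Sum.inl '' A1 ∪ Sum.inr '' A2) ↔
      WeaklySecure F G1 A1 ∧ WeaklySecure F G2 A2 := by
  constructor
  · intro h
    constructor
    · intro i hi u hu hmem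
      refine h (inl i) (by simp [hi]) (Sum.elim u 0) ?_ ?_
      · rintro (j | j) hj
        · exact Or.inl ⟨j, hu j hj, rfl⟩
        · simp at hj
      · have e : Sum.elim u (0 : Fin m2 → F) + Pi.single (Sum.inl i : Fin m1 ⊕ Fin m2) (1:F)
            = Sum.elim (u + Pi.single i 1) (0 : Fin m2 → F) := by
          funext j
          cases j with
          | inl j => simp [Pi.single_apply]
          | inr j => simp [Pi.single_apply]
        rw [e, elim_mem_rowSpace_fromBlocks]
        exact ⟨hmem, Submodule.zero_mem _⟩
    · intro i hi u hu hmem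
      refine h (inr i) (by simp [hi]) (Sum.elim 0 u) ?_ ?_
      · rintro (j | j) hj
        · simp at hj
        · exact Or.inr ⟨j, hu j hj, rfl⟩
      · have e : Sum.elim (0 : Fin m1 → F) u + Pi.single (Sum.inr i : Fin m1 ⊕ Fin m2) (1:F)
            = Sum.elim (0 : Fin m1 → F) (u + Pi.single i 1) := by
          funext j
          cases j with
          | inl j => simp [Pi.single_apply]
          | inr j => simp [Pi.single_apply]
        rw [e, elim_mem_rowSpace_fromBlocks]
        exact ⟨Submodule.zero_mem _, hmem⟩
  · rintro ⟨h1, h2⟩ i hi u hu hmem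
    have e : u + Pi.single i (1:F)
        = Sum.elim (fun j => (u + Pi.single i (1:F) : Fin m1 ⊕ Fin m2 → F) (inl j))
            (fun j => (u + Pi.single i (1:F) : Fin m1 ⊕ Fin m2 → F) (inr j)) := by
      funext j; cases j <;> rfl
    rw [e, elim_mem_rowSpace_fromBlocks] at hmem
    cases i with
    | inl i =>
      have hi1 : i ∉ A1 := fun h' => hi (Or.inl ⟨i, h', rfl⟩)
      refine h1 i hi1 (fun j => u (inl j)) ?_ ?_
      · intro j hj
        rcases hu (inl j) hj with ⟨a, ha, hae⟩ | ⟨a, ha, hae⟩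
        · cases hae; exact ha
        · simp at hae
      · have e2 : (fun j => (u + Pi.single (Sum.inl i) (1:F) : Fin m1 ⊕ Fin m2 → F) (inl j))
            = (fun j => u (inl j)) + Pi.single i 1 := by
          funext j; simp [Pi.single_apply]
        rw [e2] at hmem
        exact hmem.1
    | inr i =>
      have hi2 : i ∉ A2 := fun h' => hi (Or.inr ⟨i, h', rfl⟩)
      refine h2 i hi2 (fun j => u (inr j)) ?_ ?_
      · intro j hj
        rcases hu (inr j) hj with ⟨a, ha, hae⟩ | ⟨a, ha, hae⟩
        · simp at hae
        · cases hae; exact ha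
      · have e2 : (fun j => (u + Pi.single (Sum.inr i) (1:F) : Fin m1 ⊕ Fin m2 → F) (inr j))
            = (fun j => u (inr j)) + Pi.single i 1 := by
          funext j; simp [Pi.single_apply]
        rw [e2] at hmem
        exact hmem.2
end
end

section
/- Let F be a finite field and consider a single-sender instance on [m] partitioned into S_1 = {1,…,m_1} and S_2 = {m_1+1,…,m} such that no receiver has cross side information: K_i ⊆ S_1 for all i ∈ S_1 and K_i ⊆ S_2 for all i ∈ S_2 (the side-information digraph splits into the two vertex-disjoint sub-digraphs with no edges between them). Let A = A_1 ∪ A_2 with A_j ⊊ S_j, and let l*_j be the minimal length of a valid weakly secure linear index code over F for the sub-instance on S_j (side-information K_i, eavesdropper A_j), assumed to exist for j = 1,2. Then the minimal length l* of a valid weakly secure linear index code over F for the full instance equals l*_1 + l*_2, and the block-diagonal concatenation of optimal codes for the two sub-instances achieves it. -/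
open Matrix Sum

noncomputable section

variable (F : Type*) [Field F] [Fintype F]

/-- Achievable lengths of valid weakly secure (single-sender) linear index codes. -/
def oneLens {ι : Type*} [Fintype ι] [DecidableEq ι] (K : ι → Set ι) (A : Set ι) :
    Set ℕ :=
  {l | ∃ G : Matrix (Fin l) ι F, ValidCode F K G ∧ WeaklySecure F G A}

/-- The span of the side-information basis vectors. -/
def sideSpan {ι : Type*} [DecidableEq ι] (S : Set ι) : Submodule F (ι → F) :=
  Submodule.span F ((fun j => Pi.single j (1 : F)) '' S)

section Helpers

variable {ρ ι : Type*} [Fintype ρ] [Fintype ι] [DecidableEq ι]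

theorem sum_dotProduct' {α : Type*} [Fintype α] (f : α → ι → F) (x : ι → F) :
    (∑ a, f a) ⬝ᵥ x = ∑ a, f a ⬝ᵥ x := by
  simp only [dotProduct, Finset.sum_apply, Finset.sum_mul]
  exact Finset.sum_comm

theorem valid_iff (K : ι → Set ι) (G : Matrix ρ ι F) :
    ValidCode F K G ↔ ∀ i, Pi.single i (1 : F) ∈ rowSpace F G ⊔ sideSpan F (K i) := by
  classical
  constructor
  · intro hv i
    by_contra hni
    obtain ⟨f, hf1, hf0⟩ := Submodule.exists_dual_map_eq_bot_of_notMem hni inferInstance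
    have hzero : ∀ v ∈ rowSpace F G ⊔ sideSpan F (K i), f v = 0 := by
      intro v hv'
      have : f v ∈ Submodule.map f (rowSpace F G ⊔ sideSpan F (K i)) :=
        Submodule.mem_map_of_mem hv'
      rwa [hf0, Submodule.mem_bot] at this
    set z : ι → F := fun j => f (Pi.single j 1) with hz
    have hfv : ∀ v : ι → F, f v = ∑ j, v j * z j := by
      intro v
      conv_lhs => rw [← Finset.univ_sum_single v]
      rw [map_sum]
      refine Finset.sum_congr rfl fun j _ => ?_
      have h1 : (Pi.single j (v j) : ι → F) = (v j) • (Pi.single j (1 : F) : ι → F) := by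
        funext a; by_cases h : a = j <;> simp [Pi.single_apply, h]
      rw [h1, _root_.map_smul, smul_eq_mul]
    have hmul : G.mulVec z = 0 := by
      funext r
      have hrow : (fun j => G r j) ∈ rowSpace F G ⊔ sideSpan F (K i) :=
        Submodule.mem_sup_left (Submodule.subset_span ⟨r, rfl⟩)
      have := hzero _ hrow
      rw [hfv] at this
      simpa [Matrix.mulVec, dotProduct] using this
    have hzK : ∀ j ∈ K i, z j = 0 := by
      intro j hj
      exact hzero _ (Submodule.mem_sup_right (Submodule.subset_span ⟨j, hj, rfl⟩))
    have hzi : z i ≠ 0 := hf1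
    obtain ⟨D, hD⟩ := hv i
    have h1 := hD z
    have h2 := hD 0
    rw [hmul] at h1
    rw [Matrix.mulVec_zero] at h2
    have : (fun j : ↥(K i) => z j.1) = fun j : ↥(K i) => (0 : ι → F) j.1 := by
      funext j; exact hzK j.1 j.2
    rw [this] at h1
    rw [h1] at h2
    exact hzi (by simpa using h2)
  · intro h i
    haveI : Fintype ↥(K i) := Fintype.ofFinite _
    obtain ⟨w, hw, s, hs, hws⟩ := Submodule.mem_sup.1 (h i)
    have hw2 : w ∈ Submodule.span F (Set.range fun r j => G r j) := hw
    obtain ⟨c, hc⟩ := (Submodule.mem_span_range_iff_exists_fun F).1 hw2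
    have hs' : s ∈ Submodule.span F
        (Set.range fun j : ↥(K i) => Pi.single (j : ι) (1 : F)) := by
      unfold sideSpan at hs
      rwa [Set.image_eq_range] at hs
    obtain ⟨d, hd⟩ := (Submodule.mem_span_range_iff_exists_fun F).1 hs'
    refine ⟨fun y t => (∑ r, c r * y r) + ∑ j : ↥(K i), d j * t j, fun x => ?_⟩
    show (∑ r, c r * G.mulVec x r) + (∑ j : ↥(K i), d j * x j.1) = x i
    have hcdot : (∑ r, c r * G.mulVec x r) = w ⬝ᵥ x := by
      rw [← hc]
      have h2 : (∑ r, c r * G.mulVec x r) = c ⬝ᵥ G.mulVec x := rfl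
      rw [h2, Matrix.dotProduct_mulVec]
      congr 1
      funext j
      simp [Matrix.vecMul, dotProduct, Finset.sum_apply, Pi.smul_apply, smul_eq_mul]
    have hsdot : (∑ j : ↥(K i), d j * x j.1) = s ⬝ᵥ x := by
      rw [← hd, sum_dotProduct']
      refine Finset.sum_congr rfl fun j _ => ?_
      rw [smul_dotProduct, single_dotProduct, one_mul, smul_eq_mul]
    rw [hcdot, hsdot, ← add_dotProduct, hws, single_dotProduct, one_mul]

theorem rowSpace_reindex {ρ' : Type*} (e : ρ' ≃ ρ) (G : Matrix ρ ι F) :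
    rowSpace F (fun r => G (e r)) = rowSpace F G := by
  unfold rowSpace
  congr 1
  have : (fun (r : ρ') (j : ι) => G (e r) j) = (fun (r : ρ) (j : ι) => G r j) ∘ e := rfl
  rw [this, Set.range_comp, Equiv.range_eq_univ, Set.image_univ]

theorem valid_reindex {ρ' : Type*} (e : ρ' ≃ ρ) (K : ι → Set ι) (G : Matrix ρ ι F)
    (h : ValidCode F K G) : ValidCode F K (fun r => G (e r)) := by
  intro i
  obtain ⟨D, hD⟩ := h i
  refine ⟨fun y t => D (fun r => y (e.symm r)) t, fun x => ?_⟩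
  have heq : (fun r => (Matrix.mulVec (fun r' => G (e r')) x) (e.symm r)) = G.mulVec x := by
    funext r
    simp [Matrix.mulVec, dotProduct]
  show D (fun r => (Matrix.mulVec (fun r' => G (e r')) x) (e.symm r)) (fun j => x j.1) = x i
  rw [heq]
  exact hD x

theorem exists_rowSpace_eq (V : Submodule F (ι → F)) :
    ∃ G : Matrix (Fin (Module.finrank F V)) ι F, rowSpace F G = V := by
  let b := Module.finBasis F V
  refine ⟨fun r => (b r : ι → F), ?_⟩
  unfold rowSpace
  have h1 : (Set.range fun (r : Fin (Module.finrank F V)) (j : ι) => ((b r : ι → F)) j)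
      = V.subtype '' (Set.range b) := by
    rw [← Set.range_comp]
    rfl
  rw [h1, ← Submodule.map_span, b.span_eq, Submodule.map_subtype_top]

end Helpers

section Sums

variable {m1 m2 : ℕ}

/-- Extension by zero on the left component. -/
def extL : (Fin m1 → F) →ₗ[F] (Fin m1 ⊕ Fin m2 → F) where
  toFun v := Sum.elim v (0 : Fin m2 → F)
  map_add' u v := by funext j; cases j <;> simp
  map_smul' c v := by funext j; cases j <;> simp

/-- Extension by zero on the right component. -/
def extR : (Fin m2 → F) →ₗ[F] (Fin m1 ⊕ Fin m2 → F) where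
  toFun v := Sum.elim (0 : Fin m1 → F) v
  map_add' u v := by funext j; cases j <;> simp
  map_smul' c v := by funext j; cases j <;> simp

@[simp] theorem extL_apply (v : Fin m1 → F) (j : Fin m1 ⊕ Fin m2) :
    extL F v j = Sum.elim v (0 : Fin m2 → F) j := rfl

@[simp] theorem extR_apply (v : Fin m2 → F) (j : Fin m1 ⊕ Fin m2) :
    extR F v j = Sum.elim (0 : Fin m1 → F) v j := rfl

theorem extL_single (i : Fin m1) :
    extL F (Pi.single i (1 : F)) = Pi.single (Sum.inl i : Fin m1 ⊕ Fin m2) (1 : F) := by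
  funext j
  cases j with
  | inl a => by_cases h : a = i <;> simp [Pi.single_apply, h]
  | inr a => simp [Pi.single_apply]

theorem extR_single (i : Fin m2) :
    extR F (Pi.single i (1 : F)) = Pi.single (Sum.inr i : Fin m1 ⊕ Fin m2) (1 : F) := by
  funext j
  cases j with
  | inl a => simp [Pi.single_apply]
  | inr a => by_cases h : a = i <;> simp [Pi.single_apply, h]

/-- Restriction to the left component. -/
abbrev resL : (Fin m1 ⊕ Fin m2 → F) →ₗ[F] (Fin m1 → F) :=
  LinearMap.funLeft F F Sum.inl

/-- Restriction to the right component. -/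
abbrev resR : (Fin m1 ⊕ Fin m2 → F) →ₗ[F] (Fin m2 → F) :=
  LinearMap.funLeft F F Sum.inr

theorem resL_single_inl (i : Fin m1) :
    resL F (Pi.single (Sum.inl i : Fin m1 ⊕ Fin m2) (1 : F)) = Pi.single i 1 := by
  funext a
  by_cases h : a = i <;> simp [LinearMap.funLeft_apply, Pi.single_apply, h]

theorem resL_single_inr (i : Fin m2) :
    resL F (Pi.single (Sum.inr i : Fin m1 ⊕ Fin m2) (1 : F)) = 0 := by
  funext a
  simp [LinearMap.funLeft_apply, Pi.single_apply]

theorem resR_single_inr (i : Fin m2) :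
    resR F (Pi.single (Sum.inr i : Fin m1 ⊕ Fin m2) (1 : F)) = Pi.single i 1 := by
  funext a
  by_cases h : a = i <;> simp [LinearMap.funLeft_apply, Pi.single_apply, h]

theorem resR_single_inl (i : Fin m1) :
    resR F (Pi.single (Sum.inl i : Fin m1 ⊕ Fin m2) (1 : F)) = 0 := by
  funext a
  simp [LinearMap.funLeft_apply, Pi.single_apply]

theorem eq_of_res (w v : Fin m1 ⊕ Fin m2 → F)
    (h1 : resL F w = resL F v) (h2 : resR F w = resR F v) : w = v := by
  funext j
  cases j with
  | inl a => exact congrFun h1 a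
  | inr a => exact congrFun h2 a

theorem blocks_good {l1 l2 : ℕ}
    (K : (Fin m1 ⊕ Fin m2) → Set (Fin m1 ⊕ Fin m2))
    (A1 : Set (Fin m1)) (A2 : Set (Fin m2))
    (G1 : Matrix (Fin l1) (Fin m1) F) (G2 : Matrix (Fin l2) (Fin m2) F)
    (hv1 : ValidCode F (fun i => {j | Sum.inl j ∈ K (Sum.inl i)}) G1)
    (hs1 : WeaklySecure F G1 A1)
    (hv2 : ValidCode F (fun i => {j | Sum.inr j ∈ K (Sum.inr i)}) G2)
    (hs2 : WeaklySecure F G2 A2) :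
    ValidCode F K (Matrix.fromBlocks G1 0 0 G2) ∧
      WeaklySecure F (Matrix.fromBlocks G1 0 0 G2) (Sum.inl '' A1 ∪ Sum.inr '' A2) := by
  classical
  have hrowL : Submodule.map (extL F) (rowSpace F G1) ≤
      rowSpace F (Matrix.fromBlocks G1 0 0 G2) := by
    rw [rowSpace, Submodule.map_span]
    refine Submodule.span_le.2 ?_
    rintro _ ⟨_, ⟨r, rfl⟩, rfl⟩
    refine Submodule.subset_span ⟨Sum.inl r, ?_⟩
    funext j
    cases j <;> simp [Matrix.fromBlocks]
  have hrowR : Submodule.map (extR F) (rowSpace F G2) ≤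
      rowSpace F (Matrix.fromBlocks G1 0 0 G2) := by
    rw [rowSpace, Submodule.map_span]
    refine Submodule.span_le.2 ?_
    rintro _ ⟨_, ⟨r, rfl⟩, rfl⟩
    refine Submodule.subset_span ⟨Sum.inr r, ?_⟩
    funext j
    cases j <;> simp [Matrix.fromBlocks]
  have hmapL : Submodule.map (resL F) (rowSpace F (Matrix.fromBlocks G1 0 0 G2)) ≤
      rowSpace F G1 := by
    rw [rowSpace, Submodule.map_span]
    refine Submodule.span_le.2 ?_
    rintro _ ⟨_, ⟨r, rfl⟩, rfl⟩
    cases r with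
    | inl r =>
      refine Submodule.subset_span ⟨r, ?_⟩
      funext a
      simp [LinearMap.funLeft_apply, Matrix.fromBlocks]
    | inr r =>
      have : resL F (fun j => Matrix.fromBlocks G1 0 0 G2 (Sum.inr r) j) = 0 := by
        funext a
        simp [LinearMap.funLeft_apply, Matrix.fromBlocks]
      rw [this]
      exact Submodule.zero_mem _
  have hmapR : Submodule.map (resR F) (rowSpace F (Matrix.fromBlocks G1 0 0 G2)) ≤
      rowSpace F G2 := by
    rw [rowSpace, Submodule.map_span]
    refine Submodule.span_le.2 ?_
    rintro _ ⟨_, ⟨r, rfl⟩, rfl⟩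
    cases r with
    | inl r =>
      have : resR F (fun j => Matrix.fromBlocks G1 0 0 G2 (Sum.inl r) j) = 0 := by
        funext a
        simp [LinearMap.funLeft_apply, Matrix.fromBlocks]
      rw [this]
      exact Submodule.zero_mem _
    | inr r =>
      refine Submodule.subset_span ⟨r, ?_⟩
      funext a
      simp [LinearMap.funLeft_apply, Matrix.fromBlocks]
  constructor
  · -- validity
    rw [valid_iff]
    intro i
    cases i with
    | inl i =>
      have h := (valid_iff F _ G1).1 hv1 i
      have h2 := Submodule.mem_map_of_mem (f := (extL F : (Fin m1 → F) →ₗ[F] (Fin m1 ⊕ Fin m2 → F))) h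
      rw [Submodule.map_sup] at h2
      rw [extL_single] at h2
      refine sup_le_sup hrowL ?_ h2
      unfold sideSpan
      rw [Submodule.map_span]
      refine Submodule.span_le.2 ?_
      rintro _ ⟨_, ⟨j, hj, rfl⟩, rfl⟩
      rw [extL_single]
      exact Submodule.subset_span ⟨Sum.inl j, hj, rfl⟩
    | inr i =>
      have h := (valid_iff F _ G2).1 hv2 i
      have h2 := Submodule.mem_map_of_mem (f := (extR F : (Fin m2 → F) →ₗ[F] (Fin m1 ⊕ Fin m2 → F))) h
      rw [Submodule.map_sup] at h2
      rw [extR_single] at h2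
      refine sup_le_sup hrowR ?_ h2
      unfold sideSpan
      rw [Submodule.map_span]
      refine Submodule.span_le.2 ?_
      rintro _ ⟨_, ⟨j, hj, rfl⟩, rfl⟩
      rw [extR_single]
      exact Submodule.subset_span ⟨Sum.inr j, hj, rfl⟩
  · -- security
    intro i hi u hu hmem
    cases i with
    | inl i =>
      have hi1 : i ∉ A1 := fun h => hi (Or.inl ⟨i, h, rfl⟩)
      have := Submodule.mem_map_of_mem (f := (resL F : (Fin m1 ⊕ Fin m2 → F) →ₗ[F] (Fin m1 → F))) hmem
      have hsub := hmapL this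
      have heq : resL F (u + Pi.single (Sum.inl i : Fin m1 ⊕ Fin m2) (1 : F))
          = (fun a => u (Sum.inl a)) + Pi.single i 1 := by
        rw [map_add, resL_single_inl]
        rfl
      rw [heq] at hsub
      refine hs1 i hi1 (fun a => u (Sum.inl a)) ?_ hsub
      intro j hj
      rcases hu _ hj with ⟨a, ha, hae⟩ | ⟨a, ha, hae⟩
      · rwa [← Sum.inl.inj hae]
      · exact absurd hae (by simp)
    | inr i =>
      have hi1 : i ∉ A2 := fun h => hi (Or.inr ⟨i, h, rfl⟩)
      have := Submodule.mem_map_of_mem (f := (resR F : (Fin m1 ⊕ Fin m2 → F) →ₗ[F] (Fin m2 → F))) hmem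
      have hsub := hmapR this
      have heq : resR F (u + Pi.single (Sum.inr i : Fin m1 ⊕ Fin m2) (1 : F))
          = (fun a => u (Sum.inr a)) + Pi.single i 1 := by
        rw [map_add, resR_single_inr]
        rfl
      rw [heq] at hsub
      refine hs2 i hi1 (fun a => u (Sum.inr a)) ?_ hsub
      intro j hj
      rcases hu _ hj with ⟨a, ha, hae⟩ | ⟨a, ha, hae⟩
      · exact absurd hae (by simp)
      · rwa [← Sum.inr.inj hae]

theorem converse_bound {l : ℕ}
    (K : (Fin m1 ⊕ Fin m2) → Set (Fin m1 ⊕ Fin m2))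
    (hsep1 : ∀ i : Fin m1, K (Sum.inl i) ⊆ Set.range Sum.inl)
    (hsep2 : ∀ i : Fin m2, K (Sum.inr i) ⊆ Set.range Sum.inr)
    (A1 : Set (Fin m1)) (A2 : Set (Fin m2))
    (G : Matrix (Fin l) (Fin m1 ⊕ Fin m2) F)
    (hv : ValidCode F K G)
    (hs : WeaklySecure F G (Sum.inl '' A1 ∪ Sum.inr '' A2)) :
    ∃ l1' l2', l1' ∈ oneLens F (fun i => {j | Sum.inl j ∈ K (Sum.inl i)}) A1 ∧
      l2' ∈ oneLens F (fun i => {j | Sum.inr j ∈ K (Sum.inr i)}) A2 ∧ l1' + l2' ≤ l := by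
  classical
  set W := rowSpace F G with hW
  set W1 := W ⊓ LinearMap.ker (resR F (m1 := m1) (m2 := m2)) with hW1
  set W2 := W ⊓ LinearMap.ker (resL F (m1 := m1) (m2 := m2)) with hW2
  set V1 := Submodule.map (resL F) W1 with hV1
  set V2 := Submodule.map (resR F) W2 with hV2
  obtain ⟨G1, hG1⟩ := exists_rowSpace_eq F V1
  obtain ⟨G2, hG2⟩ := exists_rowSpace_eq F V2
  -- validity of G1
  have hval1 : ValidCode F (fun i => {j | Sum.inl j ∈ K (Sum.inl i)}) G1 := by
    rw [valid_iff]
    intro i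
    have h := (valid_iff F K G).1 hv (Sum.inl i)
    obtain ⟨w, hw, s, hs', hws⟩ := Submodule.mem_sup.1 h
    have hsker : s ∈ LinearMap.ker (resR F (m1 := m1) (m2 := m2)) := by
      refine Submodule.span_le.2 ?_ hs'
      rintro _ ⟨j, hj, rfl⟩
      obtain ⟨j', rfl⟩ := hsep1 i hj
      exact LinearMap.mem_ker.2 (resR_single_inl F j')
    have hwker : w ∈ LinearMap.ker (resR F (m1 := m1) (m2 := m2)) := by
      have : resR F w + resR F s = resR F (Pi.single (Sum.inl i) (1 : F)) := by
        rw [← map_add, hws]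
      rw [resR_single_inl, LinearMap.mem_ker.1 hsker, add_zero] at this
      exact this
    have hwW1 : w ∈ W1 := ⟨hw, hwker⟩
    have key : Pi.single i (1 : F) = resL F w + resL F s := by
      rw [← map_add, hws, resL_single_inl]
    rw [key]
    refine Submodule.add_mem _ ?_ ?_
    · refine Submodule.mem_sup_left ?_
      rw [hG1, hV1]
      exact Submodule.mem_map_of_mem hwW1
    · refine Submodule.mem_sup_right ?_
      have : resL F s ∈ Submodule.map (resL F) (sideSpan F (K (Sum.inl i))) :=
        Submodule.mem_map_of_mem hs'
      unfold sideSpan at this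
      rw [Submodule.map_span] at this
      refine Submodule.span_le.2 ?_ this
      rintro _ ⟨_, ⟨j, hj, rfl⟩, rfl⟩
      obtain ⟨j', rfl⟩ := hsep1 i hj
      rw [resL_single_inl]
      exact Submodule.subset_span ⟨j', hj, rfl⟩
  -- validity of G2
  have hval2 : ValidCode F (fun i => {j | Sum.inr j ∈ K (Sum.inr i)}) G2 := by
    rw [valid_iff]
    intro i
    have h := (valid_iff F K G).1 hv (Sum.inr i)
    obtain ⟨w, hw, s, hs', hws⟩ := Submodule.mem_sup.1 h
    have hsker : s ∈ LinearMap.ker (resL F (m1 := m1) (m2 := m2)) := by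
      refine Submodule.span_le.2 ?_ hs'
      rintro _ ⟨j, hj, rfl⟩
      obtain ⟨j', rfl⟩ := hsep2 i hj
      exact LinearMap.mem_ker.2 (resL_single_inr F j')
    have hwker : w ∈ LinearMap.ker (resL F (m1 := m1) (m2 := m2)) := by
      have : resL F w + resL F s = resL F (Pi.single (Sum.inr i) (1 : F)) := by
        rw [← map_add, hws]
      rw [resL_single_inr, LinearMap.mem_ker.1 hsker, add_zero] at this
      exact this
    have hwW2 : w ∈ W2 := ⟨hw, hwker⟩
    have key : Pi.single i (1 : F) = resR F w + resR F s := by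
      rw [← map_add, hws, resR_single_inr]
    rw [key]
    refine Submodule.add_mem _ ?_ ?_
    · refine Submodule.mem_sup_left ?_
      rw [hG2, hV2]
      exact Submodule.mem_map_of_mem hwW2
    · refine Submodule.mem_sup_right ?_
      have : resR F s ∈ Submodule.map (resR F) (sideSpan F (K (Sum.inr i))) :=
        Submodule.mem_map_of_mem hs'
      unfold sideSpan at this
      rw [Submodule.map_span] at this
      refine Submodule.span_le.2 ?_ this
      rintro _ ⟨_, ⟨j, hj, rfl⟩, rfl⟩
      obtain ⟨j', rfl⟩ := hsep2 i hj
      rw [resR_single_inr]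
      exact Submodule.subset_span ⟨j', hj, rfl⟩
  -- security of G1
  have hsec1 : WeaklySecure F G1 A1 := by
    intro i hi u hu hmem
    rw [hG1] at hmem
    obtain ⟨w, ⟨hwW, hwker⟩, hwe⟩ := hmem
    have hwform : w = extL F u + Pi.single (Sum.inl i : Fin m1 ⊕ Fin m2) (1 : F) := by
      refine eq_of_res F _ _ ?_ ?_
      · rw [map_add, resL_single_inl, hwe]
        rfl
      · rw [map_add, resR_single_inl, add_zero, LinearMap.mem_ker.1 hwker]
        rfl
    refine hs (Sum.inl i) ?_ (extL F u) ?_ ?_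
    · rintro (⟨a, ha, hae⟩ | ⟨a, ha, hae⟩)
      · exact hi (Sum.inl.inj hae ▸ ha)
      · exact absurd hae (by simp)
    · intro j hj
      cases j with
      | inl a =>
        have : u a ≠ 0 := by simpa using hj
        exact Or.inl ⟨a, hu a this, rfl⟩
      | inr a => exact absurd (by simp : extL F u (Sum.inr a) = 0) hj
    · rw [← hwform]; exact hwW
  -- security of G2
  have hsec2 : WeaklySecure F G2 A2 := by
    intro i hi u hu hmem
    rw [hG2] at hmem
    obtain ⟨w, ⟨hwW, hwker⟩, hwe⟩ := hmem
    have hwform : w = extR F u + Pi.single (Sum.inr i : Fin m1 ⊕ Fin m2) (1 : F) := by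
      refine eq_of_res F _ _ ?_ ?_
      · rw [map_add, resL_single_inr, add_zero, LinearMap.mem_ker.1 hwker]
        rfl
      · rw [map_add, resR_single_inr, hwe]
        rfl
    refine hs (Sum.inr i) ?_ (extR F u) ?_ ?_
    · rintro (⟨a, ha, hae⟩ | ⟨a, ha, hae⟩)
      · exact absurd hae (by simp)
      · exact hi (Sum.inr.inj hae ▸ ha)
    · intro j hj
      cases j with
      | inr a =>
        have : u a ≠ 0 := by simpa using hj
        exact Or.inr ⟨a, hu a this, rfl⟩
      | inl a => exact absurd (by simp : extR F u (Sum.inl a) = 0) hj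
    · rw [← hwform]; exact hwW
  -- dimension count
  refine ⟨Module.finrank F V1, Module.finrank F V2, ⟨G1, hval1, hsec1⟩, ⟨G2, hval2, hsec2⟩, ?_⟩
  have hd1 : Module.finrank F V1 ≤ Module.finrank F W1 := Submodule.finrank_map_le _ _
  have hd2 : Module.finrank F V2 ≤ Module.finrank F W2 := Submodule.finrank_map_le _ _
  have hinf : W1 ⊓ W2 = ⊥ := by
    rw [eq_bot_iff]
    rintro w ⟨⟨-, h1⟩, ⟨-, h2⟩⟩
    have h1' := LinearMap.mem_ker.1 h1
    have h2' := LinearMap.mem_ker.1 h2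
    rw [Submodule.mem_bot]
    funext j
    cases j with
    | inl a => exact congrFun h2' a
    | inr a => exact congrFun h1' a
  have hsum : Module.finrank F W1 + Module.finrank F W2 = Module.finrank F (W1 ⊔ W2 : Submodule F _) := by
    have := Submodule.finrank_sup_add_finrank_inf_eq W1 W2
    rw [hinf] at this
    simpa using this.symm
  have hle : Module.finrank F (W1 ⊔ W2 : Submodule F _) ≤ Module.finrank F W :=
    Submodule.finrank_mono (sup_le inf_le_left inf_le_left)
  have hWl : Module.finrank F W ≤ l := by
    have hWeq : W = LinearMap.range G.vecMulLinear := by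
      rw [hW, range_vecMulLinear]
      rfl
    rw [hWeq]
    calc Module.finrank F (LinearMap.range G.vecMulLinear)
        ≤ Module.finrank F (Fin l → F) := LinearMap.finrank_range_le _
      _ = l := Module.finrank_fin_fun F
  omega

end Sums

/-- Lemma 4 of the paper.  For a single-sender instance splitting into
two sub-instances `S1 ≃ Fin m1`, `S2 ≃ Fin m2` with no cross side information, the
minimal length of a valid weakly secure linear index code is exactly the sum of the
minimal lengths of the two sub-instances, and block-diagonal concatenation of optimal
sub-codes achieves it. -/
theorem opt_len_eq_add_of_noCross {m1 m2 : ℕ}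
    (K : (Fin m1 ⊕ Fin m2) → Set (Fin m1 ⊕ Fin m2)) (hK : ∀ i, i ∉ K i)
    (hsep1 : ∀ i : Fin m1, K (Sum.inl i) ⊆ Set.range Sum.inl)
    (hsep2 : ∀ i : Fin m2, K (Sum.inr i) ⊆ Set.range Sum.inr)
    (A1 : Set (Fin m1)) (A2 : Set (Fin m2))
    (hA1 : A1 ⊂ Set.univ) (hA2 : A2 ⊂ Set.univ)
    (h1 : (oneLens F (fun i => {j | Sum.inl j ∈ K (Sum.inl i)}) A1).Nonempty)
    (h2 : (oneLens F (fun i => {j | Sum.inr j ∈ K (Sum.inr i)}) A2).Nonempty) :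
    sInf (oneLens F K (Sum.inl '' A1 ∪ Sum.inr '' A2)) =
        sInf (oneLens F (fun i => {j | Sum.inl j ∈ K (Sum.inl i)}) A1) +
          sInf (oneLens F (fun i => {j | Sum.inr j ∈ K (Sum.inr i)}) A2) ∧
      ∀ (G1 : Matrix
            (Fin (sInf (oneLens F (fun i => {j | Sum.inl j ∈ K (Sum.inl i)}) A1)))
            (Fin m1) F)
        (G2 : Matrix
            (Fin (sInf (oneLens F (fun i => {j | Sum.inr j ∈ K (Sum.inr i)}) A2)))
            (Fin m2) F),
        ValidCode F (fun i => {j | Sum.inl j ∈ K (Sum.inl i)}) G1 →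
        WeaklySecure F G1 A1 →
        ValidCode F (fun i => {j | Sum.inr j ∈ K (Sum.inr i)}) G2 →
        WeaklySecure F G2 A2 →
        ValidCode F K (Matrix.fromBlocks G1 0 0 G2) ∧
          WeaklySecure F (Matrix.fromBlocks G1 0 0 G2)
            (Sum.inl '' A1 ∪ Sum.inr '' A2) := by
  classical
  set l1 := sInf (oneLens F (fun i => {j | Sum.inl j ∈ K (Sum.inl i)}) A1) with hl1
  set l2 := sInf (oneLens F (fun i => {j | Sum.inr j ∈ K (Sum.inr i)}) A2) with hl2
  obtain ⟨G1o, hv1o, hs1o⟩ := Nat.sInf_mem h1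
  obtain ⟨G2o, hv2o, hs2o⟩ := Nat.sInf_mem h2
  have hblocks := blocks_good F K A1 A2 G1o G2o hv1o hs1o hv2o hs2o
  -- membership of l1 + l2 in the combined set after reindexing
  have hmem : l1 + l2 ∈ oneLens F K (Sum.inl '' A1 ∪ Sum.inr '' A2) := by
    refine ⟨fun r => Matrix.fromBlocks G1o 0 0 G2o (finSumFinEquiv.symm r), ?_, ?_⟩
    · exact valid_reindex F finSumFinEquiv.symm K _ hblocks.1
    · intro i hi u hu
      rw [rowSpace_reindex F finSumFinEquiv.symm]
      exact hblocks.2 i hi u hu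
  have hne : (oneLens F K (Sum.inl '' A1 ∪ Sum.inr '' A2)).Nonempty := ⟨_, hmem⟩
  have hle : sInf (oneLens F K (Sum.inl '' A1 ∪ Sum.inr '' A2)) ≤ l1 + l2 :=
    Nat.sInf_le hmem
  have hge : l1 + l2 ≤ sInf (oneLens F K (Sum.inl '' A1 ∪ Sum.inr '' A2)) := by
    obtain ⟨G, hvG, hsG⟩ := Nat.sInf_mem hne
    obtain ⟨l1', l2', hm1, hm2, hsum⟩ :=
      converse_bound F K hsep1 hsep2 A1 A2 G hvG hsG
    have := Nat.sInf_le hm1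
    have := Nat.sInf_le hm2
    omega
  exact ⟨le_antisymm hle hge,
    fun G1 G2 hv1 hs1 hv2 hs2 => blocks_good F K A1 A2 G1 G2 hv1 hs1 hv2 hs2⟩
end
end

section
/- Let F be a field and let G ∈ F^{l×m} be a matrix of two-sender form on the column blocks (P_1, P_2, P_{12}): its sender-1 rows are (G_1 | 0 | G_{12}^1) and its sender-2 rows are (0 | G_2 | G_{12}^2), where G_1 ∈ F^{l_1×|P_1|} and G_2 ∈ F^{l_2×|P_2|}. Let A = A_1 ∪ A_2 ∪ P_{12} with A_1 ⊊ P_1 and A_2 ⊊ P_2 (so the eavesdropper knows all of P_{12}). If G is weakly secure against A, then G_1 is weakly secure against A_1 (as a code on P_1) and G_2 is weakly secure against A_2 (as a code on P_2). -/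
open Matrix Sum

noncomputable section

variable (F : Type*) [Field F]

/-- Let `G` be a matrix of two-sender form on the column blocks
`P1 ≃ Fin m1`, `P2 ≃ Fin m2`, `P12 ≃ Fin m12`: its sender-1 rows are `(G1 | 0 | G12¹)`
and its sender-2 rows are `(0 | G2 | G12²)`.  If `G` is weakly secure against
`A = A1 ∪ A2 ∪ P12` with `A1 ⊊ P1` and `A2 ⊊ P2`, then `G1` is weakly secure against
`A1` and `G2` is weakly secure against `A2`. -/
theorem components_weaklySecure_of_weaklySecure {m1 m2 m12 l1 l2 : ℕ}
    (G : Matrix (Fin l1 ⊕ Fin l2) (Fin m1 ⊕ Fin m2 ⊕ Fin m12) F)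
    (G1 : Matrix (Fin l1) (Fin m1) F) (G2 : Matrix (Fin l2) (Fin m2) F)
    (h11 : ∀ r j, G (Sum.inl r) (Sum.inl j) = G1 r j)
    (h12 : ∀ r j, G (Sum.inl r) (Sum.inr (Sum.inl j)) = 0)
    (h21 : ∀ r j, G (Sum.inr r) (Sum.inl j) = 0)
    (h22 : ∀ r j, G (Sum.inr r) (Sum.inr (Sum.inl j)) = G2 r j)
    (A1 : Set (Fin m1)) (A2 : Set (Fin m2))
    (hA1 : A1 ≠ Set.univ) (hA2 : A2 ≠ Set.univ)
    (hsec : WeaklySecure F G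
      {j | Sum.elim (· ∈ A1) (Sum.elim (· ∈ A2) (fun _ => True)) j}) :
    WeaklySecure F G1 A1 ∧ WeaklySecure F G2 A2 := by
  constructor
  · intro i hi u hu hmem
    rw [rowSpace, Submodule.mem_span_range_iff_exists_fun F] at hmem
    obtain ⟨c, hc⟩ := hmem
    set w : (Fin m1 ⊕ Fin m2 ⊕ Fin m12) → F :=
      ∑ r, c r • (fun j => G (Sum.inl r) j) with hw
    have hwmem : w ∈ rowSpace F G := by
      apply Submodule.sum_mem
      intro r _
      exact Submodule.smul_mem _ _ (Submodule.subset_span ⟨Sum.inl r, rfl⟩)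
    have hw1 : ∀ j, w (Sum.inl j) = u j + (Pi.single i (1:F) : _ → F) j := by
      intro j
      have h := congrFun hc j
      simp only [Finset.sum_apply, Pi.smul_apply, smul_eq_mul, Pi.add_apply] at h
      simp only [hw, Finset.sum_apply, Pi.smul_apply, smul_eq_mul, h11]
      exact h
    have hw2 : ∀ j, w (Sum.inr (Sum.inl j)) = 0 := by
      intro j
      simp [hw, h12]
    set u' : (Fin m1 ⊕ Fin m2 ⊕ Fin m12) → F := w - Pi.single (Sum.inl i) 1 with hu'
    have hsupp : ∀ j, u' j ≠ 0 →
        j ∈ {j | Sum.elim (· ∈ A1) (Sum.elim (· ∈ A2) (fun _ => True)) j} := by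
      intro j hj
      rcases j with j1 | (j2 | j3)
      · have : u' (Sum.inl j1) = u j1 := by
          simp [hu', hw1, Pi.single_apply]
        rw [this] at hj
        exact hu j1 hj
      · exfalso
        apply hj
        simp [hu', hw2, Pi.single_apply]
      · trivial
    have := hsec (Sum.inl i) (by simpa using hi) u' hsupp
    rw [hu'] at this
    rw [sub_add_cancel] at this
    exact this hwmem
  · intro i hi u hu hmem
    rw [rowSpace, Submodule.mem_span_range_iff_exists_fun F] at hmem
    obtain ⟨c, hc⟩ := hmem
    set w : (Fin m1 ⊕ Fin m2 ⊕ Fin m12) → F :=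
      ∑ r, c r • (fun j => G (Sum.inr r) j) with hw
    have hwmem : w ∈ rowSpace F G := by
      apply Submodule.sum_mem
      intro r _
      exact Submodule.smul_mem _ _ (Submodule.subset_span ⟨Sum.inr r, rfl⟩)
    have hw1 : ∀ j, w (Sum.inr (Sum.inl j)) = u j + (Pi.single i (1:F) : _ → F) j := by
      intro j
      have h := congrFun hc j
      simp only [Finset.sum_apply, Pi.smul_apply, smul_eq_mul, Pi.add_apply] at h
      simp only [hw, Finset.sum_apply, Pi.smul_apply, smul_eq_mul, h22]
      exact h
    have hw2 : ∀ j, w (Sum.inl j) = 0 := by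
      intro j
      simp [hw, h21]
    set u' : (Fin m1 ⊕ Fin m2 ⊕ Fin m12) → F := w - Pi.single (Sum.inr (Sum.inl i)) 1 with hu'
    have hsupp : ∀ j, u' j ≠ 0 →
        j ∈ {j | Sum.elim (· ∈ A1) (Sum.elim (· ∈ A2) (fun _ => True)) j} := by
      intro j hj
      rcases j with j1 | (j2 | j3)
      · exfalso
        apply hj
        simp [hu', hw2, Pi.single_apply]
      · have : u' (Sum.inr (Sum.inl j2)) = u j2 := by
          simp [hu', hw1, Pi.single_apply]
        rw [this] at hj
        exact hu j2 hj
      · trivial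
    have := hsec (Sum.inr (Sum.inl i)) (by simpa using hi) u' hsupp
    rw [hu'] at this
    rw [sub_add_cancel] at this
    exact this hwmem
end
end
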